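/- (Theorem 3.1, expectation part.) Consider a triangular array: for each n, a probability space carrying sub-σ-algebras 𝓕₁ⁿ ⊆ 𝓕₂ⁿ, integrable, identically distributed 𝓕₁ⁿ-measurable random variables F̂ⁿ,¹,…,F̂ⁿ,ᴹ⁽ⁿ⁾, integrable 𝓕₂ⁿ-measurable random variables F̂*ⁿ,¹,…,F̂*ⁿ,ᴹ⁽ⁿ⁾, and selection indices π(1),…,π(I(n)) i.i.d. uniform on {1,…,M(n)} independent of 𝓕₂ⁿ, with I(n) ≤ M(n). Let F₁ ∈ ℝ. Assume: (3.1) n·(E(F̂ⁿ,¹) − F₁) → 0 as n → ∞; and (3.2) writing Rₙᵐ = E(F̂*ⁿ,ᵐ | 𝓕₁ⁿ) − F̂ⁿ,ᵐ, one has max_{1 ≤ m ≤ M(n)} n·|Rₙᵐ| → 0 in probability and max_{1 ≤ m ≤ M(n)} n·E|Rₙᵐ| → 0. Set F̄_{M(n)} = (1/M(n))Σ_m F̂ⁿ,ᵐ, F̄_{I(n)} = (1/I(n))Σ_l F̂ⁿ,π(l), F̄*_{I(n)} = (1/I(n))Σ_l F̂*ⁿ,π(l). Then E( √n·(F̄*_{I(n)}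 − F̄_{M(n)}) | 𝓕₁ⁿ ) − E( √n·(F̄_{I(n)} − F₁) ) → 0 in probability as n → ∞. -/

import Mathlib

open MeasureTheory ProbabilityTheory Finset Filter


lemma aux_sqrt_le_nat (n : ℕ) : Real.sqrt n ≤ n := by
  have h1 : (n : ℝ) ≤ (n : ℝ) ^ 2 := by
    have := Nat.le_self_pow (two_ne_zero) n
    exact_mod_cast this
  calc Real.sqrt n ≤ Real.sqrt ((n : ℝ) ^ 2) := Real.sqrt_le_sqrt h1
    _ = n := Real.sqrt_sq (Nat.cast_nonneg n)

lemma aux_pick_repr {Ω : Type*} {Mn : ℕ} (p : Ω → Fin Mn) (X : Fin Mn → Ω → ℝ) (ω : Ω) :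
    X (p ω) ω = ∑ m, (if p ω = m then (1 : ℝ) else 0) * X m ω := by
  rw [Finset.sum_congr rfl (fun m _ => ite_mul (p ω = m) (1 : ℝ) 0 (X m ω))]
  simp [Finset.sum_ite_eq]

lemma aux_pick_integrable {Ω : Type*} [m0 : MeasurableSpace Ω] {μ : Measure Ω} {Mn : ℕ}
    {p : Ω → Fin Mn} (hp : Measurable p) {X : Fin Mn → Ω → ℝ}
    (hXint : ∀ m, Integrable (X m) μ) :
    Integrable (fun ω => X (p ω) ω) μ := by
  have h : (fun ω => X (p ω) ω)
      = fun ω => ∑ m, (if p ω = m then (1 : ℝ) else 0) * X m ω :=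
    funext (aux_pick_repr p X)
  rw [h]
  refine integrable_finset_sum _ (fun m _ => ?_)
  refine Integrable.bdd_mul (c := 1) (hXint m) ?_ (ae_of_all _ fun ω => ?_)
  · exact ((Measurable.ite (hp (measurableSet_singleton m)) measurable_const
      measurable_const).aestronglyMeasurable)
  · by_cases h' : p ω = m <;> simp [h']

lemma aux_pick_integral {Ω : Type*} {m₂ mπ : MeasurableSpace Ω} [m0 : MeasurableSpace Ω]
    {μ : Measure Ω}
    [IsProbabilityMeasure μ] (hπ0 : mπ ≤ m0)
    (hind : Indep mπ m₂ μ) {Mn : ℕ} {p : Ω → Fin Mn} (hp : Measurable[mπ] p)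
    (hu : ∀ m, μ (p ⁻¹' {m}) = (Mn : ENNReal)⁻¹)
    {X : Fin Mn → Ω → ℝ} (hXint : ∀ m, Integrable (X m) μ)
    (hXm : ∀ m, StronglyMeasurable[m₂] (X m)) :
    ∫ ω, X (p ω) ω ∂μ = (Mn : ℝ)⁻¹ * ∑ m, ∫ ω, X m ω ∂μ := by
  have hrepr : (fun ω => X (p ω) ω)
      = fun ω => ∑ m, (if p ω = m then (1 : ℝ) else 0) * X m ω :=
    funext (aux_pick_repr p X)
  have hTmeasπ : ∀ m : Fin Mn,
      Measurable[mπ] (fun ω => if p ω = m then (1 : ℝ) else 0) :=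
    fun m => Measurable.ite (hp (measurableSet_singleton m)) measurable_const measurable_const
  have hTmeas : ∀ m : Fin Mn, Measurable (fun ω => if p ω = m then (1 : ℝ) else 0) :=
    fun m => (hTmeasπ m).mono hπ0 le_rfl
  have hTint : ∀ m : Fin Mn, Integrable (fun ω => if p ω = m then (1 : ℝ) else 0) μ := by
    intro m
    refine (integrable_const (1 : ℝ)).mono'
      (hTmeas m).aestronglyMeasurable (ae_of_all _ fun ω => ?_)
    by_cases h' : p ω = m <;> simp [h']
  have hterm : ∀ m : Fin Mn,
      ∫ ω, (if p ω = m then (1 : ℝ) else 0) * X m ω ∂μ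
        = (Mn : ℝ)⁻¹ * ∫ ω, X m ω ∂μ := by
    intro m
    have hIF : IndepFun (fun ω => if p ω = m then (1 : ℝ) else 0) (X m) μ := by
      have hc1 : MeasurableSpace.comap (fun ω => if p ω = m then (1 : ℝ) else 0)
          inferInstance ≤ mπ := (hTmeasπ m).comap_le
      have hc2 : MeasurableSpace.comap (X m) inferInstance ≤ m₂ :=
        (hXm m).measurable.comap_le
      exact indep_of_indep_of_le_right (indep_of_indep_of_le_left hind hc1) hc2
    have hmul := IndepFun.integral_mul_eq_mul_integral hIF (hTint m).aestronglyMeasurable (hXint m).aestronglyMeasurable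
    rw [show (fun ω => (if p ω = m then (1 : ℝ) else 0) * X m ω)
        = (fun ω => if p ω = m then (1 : ℝ) else 0) * (X m) from rfl]
    rw [hmul]
    congr 1
    have hind_eq : (fun ω => if p ω = m then (1 : ℝ) else 0)
        = Set.indicator (p ⁻¹' {m}) (fun _ => (1 : ℝ)) := by
      funext ω
      by_cases h' : p ω = m <;> simp [Set.indicator_apply, h']
    rw [hind_eq, integral_indicator_const (1 : ℝ) (hπ0 _ (hp (measurableSet_singleton m))),
      Measure.real, hu m]
    simp [ENNReal.toReal_inv]
  have hterm_int : ∀ m : Fin Mn,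
      Integrable (fun ω => (if p ω = m then (1 : ℝ) else 0) * X m ω) μ := by
    intro m
    refine Integrable.bdd_mul (c := 1) (hXint m) (hTmeas m).aestronglyMeasurable (ae_of_all _ fun ω => ?_)
    by_cases h' : p ω = m <;> simp [h']
  rw [hrepr, integral_finset_sum _ (fun m _ => hterm_int m), Finset.mul_sum]
  exact Finset.sum_congr rfl (fun m _ => hterm m)

/-- Theorem 3.1, expectation part: under Assumptions (3.1) and
(3.2), `E(√n·(F̄*_{I(n)} − F̄_{M(n)}) | 𝓕₁ⁿ) − E(√n·(F̄_{I(n)} − F₁)) → 0`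
in probability as `n → ∞`. -/
theorem thm31_expectation_part
    (Ω : ℕ → Type*) [mΩ : ∀ n, MeasurableSpace (Ω n)]
    (μ : ∀ n, Measure (Ω n)) [∀ n, IsProbabilityMeasure (μ n)]
    (𝓕₁ 𝓕₂ : ∀ n, MeasurableSpace (Ω n))
    (h12 : ∀ n, 𝓕₁ n ≤ 𝓕₂ n) (h2 : ∀ n, 𝓕₂ n ≤ mΩ n)
    (M I : ℕ → ℕ) (hI : ∀ n, 0 < I n) (hM : ∀ n, 0 < M n) (hIM : ∀ n, I n ≤ M n)
    (F Fstar : ∀ n, Fin (M n) → Ω n → ℝ)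
    (hFint : ∀ n m, Integrable (F n m) (μ n))
    (hFmeas : ∀ n m, StronglyMeasurable[𝓕₁ n] (F n m))
    (hident : ∀ n m, @ProbabilityTheory.IdentDistrib (Ω n) (Ω n) ℝ (mΩ n) (mΩ n) _
      (F n m) (F n ⟨0, hM n⟩) (μ n) (μ n))
    (hFstarint : ∀ n m, Integrable (Fstar n m) (μ n))
    (hFstarmeas : ∀ n m, StronglyMeasurable[𝓕₂ n] (Fstar n m))
    (π : ∀ n, Fin (I n) → Ω n → Fin (M n))
    (hπmeas : ∀ n l, Measurable (π n l))
    (hiid : ∀ n, iIndepFun (π n) (μ n))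
    (hunif : ∀ n l m, μ n (π n l ⁻¹' {m}) = (M n : ENNReal)⁻¹)
    (hindep : ∀ n,
      Indep (⨆ l, MeasurableSpace.comap (π n l) inferInstance) (𝓕₂ n) (μ n))
    (F₁ : ℝ)
    -- Assumption (3.1): n·(E(F̂ⁿ,¹) − F₁) → 0
    (h31 : Tendsto (fun n : ℕ => (n : ℝ) * ((∫ ω, F n ⟨0, hM n⟩ ω ∂(μ n)) - F₁))
      atTop (nhds 0))
    -- Assumption (3.2), in-probability part: max_m n·|Rₙᵐ| → 0 in probability
    (h32p : ∀ ε : ℝ, 0 < ε →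
      Tendsto (fun n => μ n {ω | ∃ m, ε ≤
          (n : ℝ) * abs (condExp (𝓕₁ n) (μ n) (Fstar n m) ω - F n m ω)})
        atTop (nhds 0))
    -- Assumption (3.2), L¹ part: max_m n·E|Rₙᵐ| → 0
    (h32e : ∀ ε : ℝ, 0 < ε → ∀ᶠ n : ℕ in atTop, ∀ m,
      (n : ℝ) * ∫ ω, abs (condExp (𝓕₁ n) (μ n) (Fstar n m) ω - F n m ω) ∂(μ n)
        < ε) :
    ∀ ε : ℝ, 0 < ε →
      Tendsto (fun n => μ n {ω | ε ≤
          abs (condExp (𝓕₁ n) (μ n) (fun ω' => Real.sqrt n *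
                ((1 / (I n) : ℝ) * ∑ l, Fstar n (π n l ω') ω'
                  - (1 / (M n) : ℝ) * ∑ m, F n m ω')) ω
            - ∫ ω', Real.sqrt n *
                ((1 / (I n) : ℝ) * ∑ l, F n (π n l ω') ω' - F₁) ∂(μ n))})
        atTop (nhds 0) := by
  intro ε hε
  letI _inst : ∀ k : ℕ, MeasurableSpace (Ω k) := mΩ
  have hle : ∀ n, 𝓕₁ n ≤ mΩ n := fun n => (h12 n).trans (h2 n)
  have hsf : ∀ n, SigmaFinite ((μ n).trim (hle n)) := fun n => inferInstance
  have hπm0 : ∀ n l, Measurable[mΩ n] (π n l) :=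
    fun n l => (hπmeas n l).mono (h2 n) le_rfl
  have hπ0 : ∀ n, (⨆ l, MeasurableSpace.comap (π n l) inferInstance) ≤ mΩ n :=
    fun n => iSup_le fun l => (hπm0 n l).comap_le
  have hpmπ : ∀ n l, Measurable[⨆ l, MeasurableSpace.comap (π n l) inferInstance] (π n l) :=
    fun n l => Measurable.of_comap_le
      (le_iSup (fun l => MeasurableSpace.comap (π n l) inferInstance) l)
  have hMne : ∀ n, ((M n : ℝ)) ≠ 0 := fun n => Nat.cast_ne_zero.mpr (hM n).ne'
  have hIne : ∀ n, ((I n : ℝ)) ≠ 0 := fun n => Nat.cast_ne_zero.mpr (hI n).ne'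
  -- Part B : value of the deterministic integral
  have keyB : ∀ n : ℕ,
      (∫ ω', Real.sqrt n * ((1 / (I n) : ℝ) * ∑ l, F n (π n l ω') ω' - F₁) ∂(μ n))
        = Real.sqrt n * ((∫ ω, F n ⟨0, hM n⟩ ω ∂(μ n)) - F₁) := by
    intro n
    have hpick : ∀ l : Fin (I n), ∫ ω, F n (π n l ω) ω ∂(μ n)
        = ∫ ω, F n ⟨0, hM n⟩ ω ∂(μ n) := by
      intro l
      rw [aux_pick_integral (m0 := mΩ n) (hπ0 n) (hindep n) (hpmπ n l) (hunif n l) (hFint n)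
        (fun m => (hFmeas n m).mono (h12 n))]
      rw [Finset.sum_congr rfl (fun m _ => (hident n m).integral_eq)]
      rw [Finset.sum_const, Finset.card_univ, Fintype.card_fin, nsmul_eq_mul]
      field_simp
      exact mul_div_cancel_left₀ _ (hMne n)
    have hint_pick : ∀ l : Fin (I n), Integrable (fun ω => F n (π n l ω) ω) (μ n) :=
      fun l => aux_pick_integrable (m0 := mΩ n) (hπm0 n l) (hFint n)
    rw [integral_const_mul]
    congr 1
    rw [integral_sub (((integrable_finset_sum _ (fun l _ => hint_pick l)).const_mul _))
      (integrable_const F₁)]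
    rw [integral_const]
    simp only [Measure.real, measure_univ, ENNReal.toReal_one, one_smul]
    congr 1
    rw [integral_const_mul, integral_finset_sum _ (fun l _ => hint_pick l)]
    rw [Finset.sum_congr rfl (fun l _ => hpick l)]
    rw [Finset.sum_const, Finset.card_univ, Fintype.card_fin, nsmul_eq_mul]
    field_simp
    exact mul_div_cancel_left₀ _ (hIne n)
  -- Part A : identification of the conditional expectation
  have keyA : ∀ n : ℕ,
      (fun ω => Real.sqrt n *
          ((1 / (M n) : ℝ) * ∑ m, (condExp (𝓕₁ n) (μ n) (Fstar n m) ω - F n m ω)))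
        =ᵐ[μ n] condExp (𝓕₁ n) (μ n) (fun ω' => Real.sqrt n *
            ((1 / (I n) : ℝ) * ∑ l, Fstar n (π n l ω') ω'
              - (1 / (M n) : ℝ) * ∑ m, F n m ω')) := by
    intro n
    have hint_pickstar : ∀ l : Fin (I n), Integrable (fun ω => Fstar n (π n l ω) ω) (μ n) :=
      fun l => aux_pick_integrable (m0 := mΩ n) (hπm0 n l) (hFstarint n)
    refine ae_eq_condExp_of_forall_setIntegral_eq (hle n) ?_ ?_ ?_ ?_
    · -- integrability of the main function
      exact (((integrable_finset_sum _ (fun l _ => hint_pickstar l)).const_mul _).sub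
        ((integrable_finset_sum _ (fun m _ => hFint n m)).const_mul _)).const_mul _
    · -- integrability of candidate on sets
      intro s _ _
      exact (((integrable_finset_sum _
        (fun m _ => integrable_condExp.sub (hFint n m))).const_mul _).const_mul _).integrableOn
    · -- set integrals agree
      intro s hs hμs
      have hsm0 : MeasurableSet[mΩ n] s := hle n s hs
      have hcondint : ∀ m, Integrable
          (fun ω => condExp (𝓕₁ n) (μ n) (Fstar n m) ω - F n m ω) (μ n) :=
        fun m => integrable_condExp.sub (hFint n m)
      -- LHS (candidate)
      have hLHS : ∫ ω in s, Real.sqrt n *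
          ((1 / (M n) : ℝ) * ∑ m, (condExp (𝓕₁ n) (μ n) (Fstar n m) ω - F n m ω)) ∂(μ n)
          = Real.sqrt n * ((1 / (M n) : ℝ) *
            ∑ m, ((∫ ω in s, Fstar n m ω ∂(μ n)) - ∫ ω in s, F n m ω ∂(μ n))) := by
        rw [integral_const_mul, integral_const_mul,
          integral_finset_sum _ (fun m _ => (hcondint m).integrableOn)]
        congr 2
        refine Finset.sum_congr rfl (fun m _ => ?_)
        rw [integral_sub integrable_condExp.integrableOn (hFint n m).integrableOn,
          setIntegral_condExp (hle n) (hFstarint n m) hs]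
      -- RHS (the function)
      have hpickstar_set : ∀ l : Fin (I n),
          ∫ ω in s, Fstar n (π n l ω) ω ∂(μ n)
            = (M n : ℝ)⁻¹ * ∑ m, ∫ ω in s, Fstar n m ω ∂(μ n) := by
        intro l
        have h1 : ∫ ω in s, Fstar n (π n l ω) ω ∂(μ n)
            = ∫ ω, (fun m => s.indicator (Fstar n m)) (π n l ω) ω ∂(μ n) := by
          rw [← integral_indicator hsm0]
          refine integral_congr_ae (ae_of_all _ fun ω => ?_)
          by_cases hωs : ω ∈ s <;> simp [Set.indicator_apply, hωs]
        rw [h1, aux_pick_integral (m0 := mΩ n) (hπ0 n) (hindep n) (hpmπ n l) (hunif n l)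
          (fun m => (hFstarint n m).indicator hsm0)
          (fun m => (hFstarmeas n m).indicator (h12 n s hs))]
        congr 1
        exact Finset.sum_congr rfl (fun m _ => integral_indicator hsm0)
      have hRHS : ∫ ω' in s, Real.sqrt n *
          ((1 / (I n) : ℝ) * ∑ l, Fstar n (π n l ω') ω'
            - (1 / (M n) : ℝ) * ∑ m, F n m ω') ∂(μ n)
          = Real.sqrt n * ((1 / (I n) : ℝ) *
              ((I n : ℝ) * ((M n : ℝ)⁻¹ * ∑ m, ∫ ω in s, Fstar n m ω ∂(μ n)))
            - (1 / (M n) : ℝ) * ∑ m, ∫ ω in s, F n m ω ∂(μ n)) := by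
        rw [integral_const_mul]
        congr 1
        rw [integral_sub (((integrable_finset_sum _
            (fun l _ => hint_pickstar l)).const_mul _).integrableOn)
          (((integrable_finset_sum _ (fun m _ => hFint n m)).const_mul _).integrableOn)]
        congr 1
        · rw [integral_const_mul, integral_finset_sum _
            (fun l _ => (hint_pickstar l).integrableOn)]
          congr 1
          rw [Finset.sum_congr rfl (fun l _ => hpickstar_set l)]
          rw [Finset.sum_const, Finset.card_univ, Fintype.card_fin, nsmul_eq_mul]
        · rw [integral_const_mul, integral_finset_sum _ (fun m _ => (hFint n m).integrableOn)]
      rw [hLHS, hRHS]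
      rw [Finset.sum_sub_distrib]
      have : (1 / (I n) : ℝ) * ((I n : ℝ) * ((M n : ℝ)⁻¹ * ∑ m, ∫ ω in s, Fstar n m ω ∂(μ n)))
          = (1 / (M n) : ℝ) * ∑ m, ∫ ω in s, Fstar n m ω ∂(μ n) := by
        field_simp
        rw [mul_div_mul_left _ _ (hIne n)]
      rw [this]
      ring
    · -- candidate is 𝓕₁-strongly measurable
      refine StronglyMeasurable.aestronglyMeasurable ?_
      refine StronglyMeasurable.const_mul ?_ _
      refine StronglyMeasurable.const_mul ?_ _
      exact Finset.stronglyMeasurable_fun_sum _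
        (fun m _ => stronglyMeasurable_condExp.sub (hFmeas n m))
  -- eventual bound |B n| < ε/2
  have hBsmall : ∀ᶠ n : ℕ in atTop,
      |(∫ ω', Real.sqrt n * ((1 / (I n) : ℝ) * ∑ l, F n (π n l ω') ω' - F₁) ∂(μ n))|
        < ε / 2 := by
    have hnorm := tendsto_zero_iff_norm_tendsto_zero.mp h31
    filter_upwards [hnorm.eventually_lt_const (by linarith : (0:ℝ) < ε / 2)] with n hn
    rw [keyB n]
    have h1 : |Real.sqrt n * ((∫ ω, F n ⟨0, hM n⟩ ω ∂(μ n)) - F₁)|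
        ≤ |(n : ℝ) * ((∫ ω, F n ⟨0, hM n⟩ ω ∂(μ n)) - F₁)| := by
      rw [abs_mul, abs_mul]
      refine mul_le_mul_of_nonneg_right ?_ (abs_nonneg _)
      rw [abs_of_nonneg (Real.sqrt_nonneg _), abs_of_nonneg (Nat.cast_nonneg n)]
      exact aux_sqrt_le_nat n
    calc |Real.sqrt n * ((∫ ω, F n ⟨0, hM n⟩ ω ∂(μ n)) - F₁)|
        ≤ |(n : ℝ) * ((∫ ω, F n ⟨0, hM n⟩ ω ∂(μ n)) - F₁)| := h1
      _ < ε / 2 := by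
          rw [show |(n : ℝ) * ((∫ ω, F n ⟨0, hM n⟩ ω ∂(μ n)) - F₁)|
            = ‖(n : ℝ) * ((∫ ω, F n ⟨0, hM n⟩ ω ∂(μ n)) - F₁)‖ from (Real.norm_eq_abs _).symm]
          exact hn
  -- final squeeze
  refine tendsto_of_tendsto_of_tendsto_of_le_of_le'
    (tendsto_const_nhds) (h32p (ε / 2) (by linarith))
    (Eventually.of_forall (fun n => zero_le)) ?_
  filter_upwards [hBsmall] with n hBn
  -- inclusion of events (up to a null set)
  set Bn := (∫ ω', Real.sqrt n * ((1 / (I n) : ℝ) * ∑ l, F n (π n l ω') ω' - F₁) ∂(μ n))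
    with hBndef
  set g := (fun ω => Real.sqrt n *
      ((1 / (M n) : ℝ) * ∑ m, (condExp (𝓕₁ n) (μ n) (Fstar n m) ω - F n m ω))) with hgdef
  set cf := condExp (𝓕₁ n) (μ n) (fun ω' => Real.sqrt n *
      ((1 / (I n) : ℝ) * ∑ l, Fstar n (π n l ω') ω'
        - (1 / (M n) : ℝ) * ∑ m, F n m ω')) with hcfdef
  have hnull : μ n {ω | ¬ g ω = cf ω} = 0 := ae_iff.mp (keyA n)
  have hsubset : {ω | ε ≤ |cf ω - Bn|}
      ⊆ {ω | ∃ m, ε / 2 ≤ (n : ℝ) * |condExp (𝓕₁ n) (μ n) (Fstar n m) ω - F n m ω|}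
        ∪ {ω | ¬ g ω = cf ω} := by
    intro ω hω
    by_cases hg : g ω = cf ω
    · left
      simp only [Set.mem_setOf_eq] at hω ⊢
      rw [← hg] at hω
      -- ε/2 ≤ |g ω|
      have habs : ε / 2 ≤ |g ω| := by
        have h1 : |g ω - Bn| ≤ |g ω| + |Bn| := by
          calc |g ω - Bn| = |g ω + -Bn| := by ring_nf
            _ ≤ |g ω| + |-Bn| := abs_add_le _ _
            _ = |g ω| + |Bn| := by rw [abs_neg]
        linarith
      -- |g ω| ≤ √n * (1/M) * ∑ |R m|
      have h2 : |g ω| ≤ Real.sqrt n * ((1 / (M n) : ℝ) *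
          ∑ m, |condExp (𝓕₁ n) (μ n) (Fstar n m) ω - F n m ω|) := by
        rw [hgdef]
        simp only [abs_mul]
        rw [abs_of_nonneg (Real.sqrt_nonneg _),
          abs_of_nonneg (by positivity : (0:ℝ) ≤ (1 / (M n) : ℝ))]
        refine mul_le_mul_of_nonneg_left (mul_le_mul_of_nonneg_left ?_ (by positivity))
          (Real.sqrt_nonneg _)
        exact Finset.abs_sum_le_sum_abs _ _
      -- ∑ (ε/2) ≤ ∑ n * |R m|
      have h3 : ∑ _m : Fin (M n), (ε / 2)
          ≤ ∑ m, (n : ℝ) * |condExp (𝓕₁ n) (μ n) (Fstar n m) ω - F n m ω| := by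
        have hsum_nonneg : (0:ℝ) ≤ ∑ m, |condExp (𝓕₁ n) (μ n) (Fstar n m) ω - F n m ω| :=
          Finset.sum_nonneg (fun m _ => abs_nonneg _)
        have h4 : (M n : ℝ) * (ε / 2) ≤ Real.sqrt n *
            ∑ m, |condExp (𝓕₁ n) (μ n) (Fstar n m) ω - F n m ω| := by
          have := le_trans habs h2
          have hM' : (0:ℝ) < (M n : ℝ) := by exact_mod_cast hM n
          calc (M n : ℝ) * (ε / 2)
              ≤ (M n : ℝ) * (Real.sqrt n * ((1 / (M n) : ℝ) *
                ∑ m, |condExp (𝓕₁ n) (μ n) (Fstar n m) ω - F n m ω|)) :=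
                mul_le_mul_of_nonneg_left this hM'.le
            _ = Real.sqrt n * ∑ m, |condExp (𝓕₁ n) (μ n) (Fstar n m) ω - F n m ω| := by
                field_simp
        have h5 : Real.sqrt n *
            ∑ m, |condExp (𝓕₁ n) (μ n) (Fstar n m) ω - F n m ω|
            ≤ (n : ℝ) * ∑ m, |condExp (𝓕₁ n) (μ n) (Fstar n m) ω - F n m ω| :=
          mul_le_mul_of_nonneg_right (aux_sqrt_le_nat n) hsum_nonneg
        rw [Finset.sum_const, Finset.card_univ, Fintype.card_fin, nsmul_eq_mul,
          ← Finset.mul_sum]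
        linarith
      haveI : Nonempty (Fin (M n)) := Fin.pos_iff_nonempty.mp (hM n)
      obtain ⟨m, _, hm⟩ := Finset.exists_le_of_sum_le Finset.univ_nonempty h3
      exact ⟨m, hm⟩
    · right
      exact hg
  calc μ n {ω | ε ≤ |cf ω - Bn|}
      ≤ μ n ({ω | ∃ m, ε / 2 ≤ (n : ℝ) * |condExp (𝓕₁ n) (μ n) (Fstar n m) ω - F n m ω|}
        ∪ {ω | ¬ g ω = cf ω}) := measure_mono hsubset
    _ ≤ μ n {ω | ∃ m, ε / 2 ≤ (n : ℝ) * |condExp (𝓕₁ n) (μ n) (Fstar n m) ω - F n m ω|}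
        + μ n {ω | ¬ g ω = cf ω} := measure_union_le _ _
    _ = μ n {ω | ∃ m, ε / 2 ≤ (n : ℝ) * |condExp (𝓕₁ n) (μ n) (Fstar n m) ω - F n m ω|} := by
        rw [hnull, add_zero]
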